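/- Let k ≥ 2, let 𝟙 be the constant weight vector with 𝟙_i = 1 for all i, and let γ : Fin k → ℕ be a string generator with γ₁ ∈ {0,1}. Then the 𝟙-weighted string satisfies T_2(S_𝟙(γ)) = 0. (Every string belonging to a generalized Fibonacci polynomial F_n is annihilated by T_2.) -/

import Mathlib

open MvPolynomial Finset

/-- The weight coefficient `A_ω(α)` of Theorem 2.1 (for `α ≠ 0`):
`A_ω(α) = multinomial(α) · (Σ α_i ω_i) / (Σ α_i)`. -/
noncomputable def Aw {k : ℕ} (ω : Fin k → ℝ) (α : Fin k → ℕ) : ℝ :=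
  (Nat.multinomial Finset.univ α : ℝ) * (∑ i, (α i : ℝ) * ω i) / (∑ i, (α i : ℝ))

/-- The isobaric degree `Σ_{i=1}^k i·α_i` of an exponent vector. -/
def isoDeg {k : ℕ} (α : Fin k → ℕ) : ℕ := ∑ i, (i.1 + 1) * α i

/-- The (finite) set of exponent vectors of isobaric degree `n`. -/
def wipIndex (k n : ℕ) : Finset (Fin k → ℕ) :=
  (Fintype.piFinset fun _ : Fin k => Finset.range (n + 1)).filter fun α => isoDeg α = n

/-- The weighted isobaric polynomial `P_{n,ω} = Σ_α A_ω(α)·t^α`. -/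
noncomputable def WIP (k n : ℕ) (ω : Fin k → ℝ) : MvPolynomial (Fin k) ℝ :=
  ∑ α ∈ wipIndex k n, MvPolynomial.monomial (Finsupp.equivFunOnFinite.symm α) (Aw ω α)

/-- The operator `T_m(P) = D₁₁P − Σ_j t_j D_{2j}P − m·D₂P`. -/
noncomputable def Tm (k : ℕ) (hk : 2 ≤ k) (m : ℝ) (P : MvPolynomial (Fin k) ℝ) :
    MvPolynomial (Fin k) ℝ :=
  pderiv (⟨0, by omega⟩ : Fin k) (pderiv (⟨0, by omega⟩ : Fin k) P)
    - ∑ j : Fin k, X j * pderiv (⟨1, by omega⟩ : Fin k) (pderiv j P)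
    - C m * pderiv (⟨1, by omega⟩ : Fin k) P

/-- The `j`-th element `γ^{(j)}` of the string generated by `γ`. -/
def strElem (k : ℕ) (hk : 2 ≤ k) (γ : Fin k → ℕ) (j : ℕ) : Fin k → ℕ :=
  fun i => if i = (⟨0, by omega⟩ : Fin k) then γ i + 2 * j
    else if i = (⟨1, by omega⟩ : Fin k) then γ i - j else γ i

/-- The `ω`-weighted string generated by `γ`:
`S_ω(γ) = Σ_{j=0}^{γ₂} A_ω(γ^{(j)})·t^{γ^{(j)}}`. -/
noncomputable def strPoly (k : ℕ) (hk : 2 ≤ k) (ω : Fin k → ℝ) (γ : Fin k → ℕ) :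
    MvPolynomial (Fin k) ℝ :=
  ∑ j ∈ Finset.range (γ (⟨1, by omega⟩ : Fin k) + 1),
    MvPolynomial.monomial (Finsupp.equivFunOnFinite.symm (strElem k hk γ j))
      (Aw ω (strElem k hk γ j))

/-! ### Auxiliary lemmas -/

lemma X_mul_pderiv_pderiv {k : ℕ} (j v : Fin k) (d : Fin k →₀ ℕ) (c : ℝ) :
    X j * pderiv v (pderiv j (monomial d c)) =
      monomial (d - Finsupp.single v 1)
        (c * ((d j * ((d - Finsupp.single j 1 : Fin k →₀ ℕ) v) : ℕ))) := by
  rw [pderiv_monomial, pderiv_monomial]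
  by_cases hj : d j = 0
  · simp [hj]
  by_cases hv : (d - Finsupp.single j 1 : Fin k →₀ ℕ) v = 0
  · simp [hv]
  have hj1 : 1 ≤ d j := Nat.one_le_iff_ne_zero.2 hj
  have hv1 : 1 ≤ (d - Finsupp.single j 1 : Fin k →₀ ℕ) v := Nat.one_le_iff_ne_zero.2 hv
  rw [show (X j : MvPolynomial (Fin k) ℝ) = monomial (Finsupp.single j 1) 1 from rfl,
    monomial_mul, one_mul]
  have hexp : Finsupp.single j 1 + (d - Finsupp.single j 1 - Finsupp.single v 1)
      = d - Finsupp.single v 1 := by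
    simp only [Finsupp.tsub_apply, Finsupp.single_apply] at hv1
    ext i
    simp only [Finsupp.add_apply, Finsupp.tsub_apply, Finsupp.single_apply]
    by_cases hji : j = i <;> by_cases hvi : v = i <;> simp_all
  rw [hexp]
  congr 1
  push_cast
  ring

lemma nat_sum_deriv {k : ℕ} (d : Fin k →₀ ℕ) (v : Fin k) :
    ∑ j : Fin k, d j * ((d - Finsupp.single j 1 : Fin k →₀ ℕ) v)
      = d v * ((∑ i : Fin k, d i) - 1) := by
  have key : ∀ s t : ℕ, s * t + t * (t - 1) = t * (s + t - 1) := by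
    intro s t
    cases t with
    | zero => simp
    | succ t => simp [Nat.succ_sub_one]; ring
  rw [← Finset.sum_erase_add univ _ (mem_univ v), ← Finset.sum_erase_add univ d (mem_univ v)]
  have h1 : ∀ j ∈ univ.erase v, d j * ((d - Finsupp.single j 1 : Fin k →₀ ℕ) v) = d j * d v := by
    intro j hj
    have : j ≠ v := (Finset.mem_erase.1 hj).1
    rw [Finsupp.tsub_apply, Finsupp.single_apply, if_neg this, Nat.sub_zero]
  rw [Finset.sum_congr rfl h1, ← Finset.sum_mul]
  have h2 : (d - Finsupp.single v 1 : Fin k →₀ ℕ) v = d v - 1 := by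
    rw [Finsupp.tsub_apply, Finsupp.single_eq_same]
  rw [h2]
  exact key _ _

lemma Tm_monomial (k : ℕ) (hk : 2 ≤ k) (m : ℝ) (d : Fin k →₀ ℕ) (c : ℝ) :
    Tm k hk m (monomial d c) =
      monomial (d - Finsupp.single (⟨0, by omega⟩ : Fin k) 1
          - Finsupp.single (⟨0, by omega⟩ : Fin k) 1)
        (c * (d ⟨0, by omega⟩)
          * ((d - Finsupp.single (⟨0, by omega⟩ : Fin k) 1 : Fin k →₀ ℕ) ⟨0, by omega⟩))
      - monomial (d - Finsupp.single (⟨1, by omega⟩ : Fin k) 1)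
        (c * ((d ⟨1, by omega⟩ * ((∑ i : Fin k, d i) - 1) : ℕ))
          + m * (c * (d ⟨1, by omega⟩))) := by
  unfold Tm
  rw [pderiv_monomial, pderiv_monomial, pderiv_monomial, C_mul_monomial]
  simp_rw [X_mul_pderiv_pderiv]
  rw [← map_sum (monomial (d - Finsupp.single (⟨1, by omega⟩ : Fin k) 1)), ← Finset.mul_sum,
    sub_sub, ← map_add (monomial (d - Finsupp.single (⟨1, by omega⟩ : Fin k) 1))]
  congr 2
  rw [← Nat.cast_sum, nat_sum_deriv]

lemma Tm_sum (k : ℕ) (hk : 2 ≤ k) (m : ℝ) {ι : Type*} (s : Finset ι)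
    (f : ι → MvPolynomial (Fin k) ℝ) :
    Tm k hk m (∑ x ∈ s, f x) = ∑ x ∈ s, Tm k hk m (f x) := by
  unfold Tm
  simp only [map_sum, Finset.mul_sum, Finset.sum_sub_distrib]
  rw [Finset.sum_comm]

lemma Aw_one {k : ℕ} (α : Fin k → ℕ) (h : ∑ i, α i ≠ 0) :
    Aw (fun _ => 1) α = (Nat.multinomial Finset.univ α : ℝ) := by
  unfold Aw
  have h0 : (∑ i, (α i : ℝ)) = ((∑ i, α i : ℕ) : ℝ) := by push_cast; rfl
  simp only [mul_one, h0]
  rw [mul_div_assoc, div_self, mul_one]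
  exact_mod_cast h

section
variable (k : ℕ) (hk : 2 ≤ k) (γ : Fin k → ℕ)

lemma ne10 : (⟨1, by omega⟩ : Fin k) ≠ (⟨0, by omega⟩ : Fin k) := by
  simp [Fin.ext_iff]

lemma strElem0 (j : ℕ) : strElem k hk γ j ⟨0, by omega⟩ = γ ⟨0, by omega⟩ + 2 * j := by
  simp [strElem]

lemma strElem1 (j : ℕ) : strElem k hk γ j ⟨1, by omega⟩ = γ ⟨1, by omega⟩ - j := by
  simp [strElem, Fin.ext_iff]

lemma strElem_other (j : ℕ) (i : Fin k) (h0 : i ≠ ⟨0, by omega⟩) (h1 : i ≠ ⟨1, by omega⟩) :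
    strElem k hk γ j i = γ i := by
  simp [strElem, h0, h1]

lemma strElem_sum (j : ℕ) (hj : j ≤ γ ⟨1, by omega⟩) :
    ∑ i, strElem k hk γ j i = (∑ i, γ i) + j := by
  have h1 : (⟨1, by omega⟩ : Fin k) ∈ (univ : Finset (Fin k)).erase ⟨0, by omega⟩ :=
    Finset.mem_erase.2 ⟨ne10 k hk, mem_univ _⟩
  have e1 : ∀ f : Fin k → ℕ, ∑ i, f i = f ⟨0, by omega⟩ + (f ⟨1, by omega⟩
      + ∑ i ∈ ((univ : Finset (Fin k)).erase ⟨0, by omega⟩).erase ⟨1, by omega⟩, f i) := by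
    intro f
    rw [← Finset.add_sum_erase _ f (mem_univ (⟨0, by omega⟩ : Fin k)),
      ← Finset.add_sum_erase _ f h1]
  rw [e1, e1 γ]
  have e2 : ∑ i ∈ ((univ : Finset (Fin k)).erase ⟨0, by omega⟩).erase ⟨1, by omega⟩,
      strElem k hk γ j i
      = ∑ i ∈ ((univ : Finset (Fin k)).erase ⟨0, by omega⟩).erase ⟨1, by omega⟩, γ i := by
    refine Finset.sum_congr rfl fun i hi => ?_
    exact strElem_other k hk γ j i (Finset.mem_erase.1 (Finset.mem_erase.1 hi).2).1
      (Finset.mem_erase.1 hi).1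
  rw [e2, strElem0, strElem1]
  omega

lemma strElem_prod (j : ℕ) :
    ∏ i, (strElem k hk γ j i).factorial
      = (γ ⟨0, by omega⟩ + 2 * j).factorial * ((γ ⟨1, by omega⟩ - j).factorial
        * ∏ i ∈ ((univ : Finset (Fin k)).erase ⟨0, by omega⟩).erase ⟨1, by omega⟩,
            (γ i).factorial) := by
  have h1 : (⟨1, by omega⟩ : Fin k) ∈ (univ : Finset (Fin k)).erase ⟨0, by omega⟩ :=
    Finset.mem_erase.2 ⟨ne10 k hk, mem_univ _⟩
  rw [← Finset.mul_prod_erase _ _ (mem_univ (⟨0, by omega⟩ : Fin k)),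
    ← Finset.mul_prod_erase _ _ h1, strElem0, strElem1]
  congr 2
  refine Finset.prod_congr rfl fun i hi => ?_
  rw [strElem_other k hk γ j i (Finset.mem_erase.1 (Finset.mem_erase.1 hi).2).1
    (Finset.mem_erase.1 hi).1]

set_option maxHeartbeats 1000000 in
lemma key_identity (j : ℕ) (hj : j < γ ⟨1, by omega⟩) :
    Nat.multinomial univ (strElem k hk γ (j + 1))
        * ((γ ⟨0, by omega⟩ + 2 * j + 2) * (γ ⟨0, by omega⟩ + 2 * j + 1))
      = Nat.multinomial univ (strElem k hk γ j)
        * ((γ ⟨1, by omega⟩ - j) * ((∑ i, γ i) + j + 1)) := by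
  set a := γ (⟨0, by omega⟩ : Fin k) with ha
  set b := γ (⟨1, by omega⟩ : Fin k) with hb
  set R := ∏ i ∈ ((univ : Finset (Fin k)).erase ⟨0, by omega⟩).erase ⟨1, by omega⟩,
    (γ i).factorial with hR
  set N := ∑ i, γ i with hN
  obtain ⟨c, hc⟩ : ∃ c, b - j = c + 1 := ⟨b - j - 1, by omega⟩
  have hbj1 : b - (j + 1) = c := by omega
  have spec0 := Nat.multinomial_spec univ (strElem k hk γ j)
  have spec1 := Nat.multinomial_spec univ (strElem k hk γ (j + 1))
  rw [strElem_prod k hk γ j, strElem_sum k hk γ j (by omega), ← ha, ← hb, ← hR, ← hN, hc]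
    at spec0
  rw [strElem_prod k hk γ (j + 1), strElem_sum k hk γ (j + 1) (by omega), ← ha, ← hb, ← hR,
    ← hN, hbj1] at spec1
  obtain ⟨m0, hm0⟩ : ∃ m, Nat.multinomial univ (strElem k hk γ j) = m := ⟨_, rfl⟩
  obtain ⟨m1, hm1⟩ : ∃ m, Nat.multinomial univ (strElem k hk γ (j + 1)) = m := ⟨_, rfl⟩
  rw [hm0] at spec0 ⊢
  rw [hm1] at spec1 ⊢
  have hA : a + 2 * (j + 1) = (a + 2 * j + 1) + 1 := by omega
  rw [hA, Nat.factorial_succ, Nat.factorial_succ (a + 2 * j)] at spec1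
  have hQ : 0 < (a + 2 * j).factorial * (c.factorial * R) := by
    apply Nat.mul_pos (Nat.factorial_pos _)
    exact Nat.mul_pos (Nat.factorial_pos _) (Finset.prod_pos fun i _ => Nat.factorial_pos _)
  apply Nat.eq_of_mul_eq_mul_right hQ
  rw [hc]
  calc m1 * ((a + 2 * j + 2) * (a + 2 * j + 1)) * ((a + 2 * j).factorial * (c.factorial * R))
      = (a + 2 * j + 1 + 1) * ((a + 2 * j + 1) * (a + 2 * j).factorial)
          * (c.factorial * R) * m1 := by ring
    _ = (N + (j + 1)).factorial := spec1
    _ = (N + j + 1) * (N + j).factorial := by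
        rw [show N + (j + 1) = (N + j) + 1 by omega, Nat.factorial_succ]
    _ = (N + j + 1) * ((a + 2 * j).factorial * ((c + 1).factorial * R) * m0) := by rw [spec0]
    _ = m0 * ((c + 1) * (N + j + 1)) * ((a + 2 * j).factorial * (c.factorial * R)) := by
        rw [Nat.factorial_succ c]; ring

end

lemma big_lemma (m0 m1 a b N j : ℕ) (hN : 1 ≤ N)
    (hkey : m1 * ((a + 2 * j + 2) * (a + 2 * j + 1)) = m0 * ((b - j) * (N + j + 1))) :
    m1 * (a + 2 * (j + 1)) * ((a + 2 * (j + 1)) - 1)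
      = m0 * ((b - j) * ((N + j) - 1)) + 2 * (m0 * (b - j)) := by
  have e0 : a + 2 * (j + 1) = a + 2 * j + 2 := by omega
  have e1 : (a + 2 * (j + 1)) - 1 = a + 2 * j + 1 := by omega
  have h2 : ((N + j) - 1) + 2 = N + j + 1 := by omega
  rw [e1, e0]
  calc m1 * (a + 2 * j + 2) * (a + 2 * j + 1)
      = m1 * ((a + 2 * j + 2) * (a + 2 * j + 1)) := by ring
    _ = m0 * ((b - j) * (N + j + 1)) := hkey
    _ = m0 * ((b - j) * (((N + j) - 1) + 2)) := by rw [h2]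
    _ = _ := by ring

/-- The "A-part" of `Tm` applied to the `j`-th monomial of a string. -/
noncomputable def Apart (k : ℕ) (hk : 2 ≤ k) (γ : Fin k → ℕ) (j : ℕ) :
    MvPolynomial (Fin k) ℝ :=
  monomial (Finsupp.equivFunOnFinite.symm (strElem k hk γ j)
      - Finsupp.single (⟨0, by omega⟩ : Fin k) 1 - Finsupp.single (⟨0, by omega⟩ : Fin k) 1)
    (Aw (fun _ => 1) (strElem k hk γ j)
      * ((Finsupp.equivFunOnFinite.symm (strElem k hk γ j)) ⟨0, by omega⟩)
      * ((Finsupp.equivFunOnFinite.symm (strElem k hk γ j)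
          - Finsupp.single (⟨0, by omega⟩ : Fin k) 1 : Fin k →₀ ℕ) ⟨0, by omega⟩))

/-- The "B-part" of `Tm` applied to the `j`-th monomial of a string. -/
noncomputable def Bpart (k : ℕ) (hk : 2 ≤ k) (γ : Fin k → ℕ) (j : ℕ) :
    MvPolynomial (Fin k) ℝ :=
  monomial (Finsupp.equivFunOnFinite.symm (strElem k hk γ j)
      - Finsupp.single (⟨1, by omega⟩ : Fin k) 1)
    (Aw (fun _ => 1) (strElem k hk γ j)
      * (((Finsupp.equivFunOnFinite.symm (strElem k hk γ j)) ⟨1, by omega⟩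
          * ((∑ i : Fin k, (Finsupp.equivFunOnFinite.symm (strElem k hk γ j)) i) - 1) : ℕ))
      + 2 * (Aw (fun _ => 1) (strElem k hk γ j)
          * ((Finsupp.equivFunOnFinite.symm (strElem k hk γ j)) ⟨1, by omega⟩)))

lemma Tm_strPoly (k : ℕ) (hk : 2 ≤ k) (γ : Fin k → ℕ) :
    Tm k hk 2 (strPoly k hk (fun _ => 1) γ) =
      ∑ j ∈ Finset.range (γ (⟨1, by omega⟩ : Fin k) + 1),
        (Apart k hk γ j - Bpart k hk γ j) := by
  unfold strPoly
  rw [Tm_sum]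
  refine Finset.sum_congr rfl fun j _ => ?_
  rw [Tm_monomial]
  rfl

lemma Apart_zero (k : ℕ) (hk : 2 ≤ k) (γ : Fin k → ℕ)
    (hγ : γ (⟨0, by omega⟩ : Fin k) = 0 ∨ γ (⟨0, by omega⟩ : Fin k) = 1) :
    Apart k hk γ 0 = 0 := by
  rcases hγ with h | h <;>
    simp [Apart, strElem0, h, Finsupp.tsub_apply, Finsupp.coe_equivFunOnFinite_symm,
      Finsupp.single_eq_same]

lemma Bpart_top (k : ℕ) (hk : 2 ≤ k) (γ : Fin k → ℕ) :
    Bpart k hk γ (γ (⟨1, by omega⟩ : Fin k)) = 0 := by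
  simp [Bpart, strElem1, Finsupp.coe_equivFunOnFinite_symm]

set_option maxHeartbeats 1600000 in
/-- Every string belonging to a generalized Fibonacci polynomial (i.e. weighted by
the unit weight vector `𝟙`) is annihilated by `T_2`. -/
theorem fib_string_in_ker_T2 (k : ℕ) (hk : 2 ≤ k) (γ : Fin k → ℕ)
    (hγ : γ (⟨0, by omega⟩ : Fin k) = 0 ∨ γ (⟨0, by omega⟩ : Fin k) = 1) :
    Tm k hk 2 (strPoly k hk (fun _ => 1) γ) = 0 := by
  have step : ∀ j ∈ Finset.range (γ (⟨1, by omega⟩ : Fin k)),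
      Apart k hk γ (j + 1) = Bpart k hk γ j := by
    intro j hj
    have hjb : j < γ (⟨1, by omega⟩ : Fin k) := Finset.mem_range.1 hj
    have hbN : γ (⟨1, by omega⟩ : Fin k) ≤ ∑ i, γ i :=
      Finset.single_le_sum (f := γ) (fun i _ => Nat.zero_le _) (mem_univ _)
    have hs0 : ∑ i, strElem k hk γ j i = (∑ i, γ i) + j :=
      strElem_sum k hk γ j (by omega)
    have hs1 : ∑ i, strElem k hk γ (j + 1) i = (∑ i, γ i) + (j + 1) :=
      strElem_sum k hk γ (j + 1) (by omega)
    unfold Apart Bpart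
    congr 2
    · ext i
      simp only [Finsupp.tsub_apply, Finsupp.single_apply,
        Finsupp.coe_equivFunOnFinite_symm]
      by_cases hi0 : i = (⟨0, by omega⟩ : Fin k)
      · subst hi0
        rw [strElem0, strElem0]
        simp [ne10 k hk]
        omega
      · by_cases hi1 : i = (⟨1, by omega⟩ : Fin k)
        · subst hi1
          rw [strElem1, strElem1]
          simp [Ne.symm hi0, ne10 k hk]
          omega
        · rw [strElem_other k hk γ _ i hi0 hi1, strElem_other k hk γ _ i hi0 hi1]
          simp [Ne.symm hi0, Ne.symm hi1]
    · simp only [Finsupp.coe_equivFunOnFinite_symm, Finsupp.tsub_apply,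
        Finsupp.single_eq_same]
      rw [strElem0, strElem1, hs0, Aw_one _ (by rw [hs1]; omega), Aw_one _ (by rw [hs0]; omega)]
      have hkey := key_identity k hk γ j hjb
      obtain ⟨m0, hm0⟩ : ∃ m, Nat.multinomial univ (strElem k hk γ j) = m := ⟨_, rfl⟩
      obtain ⟨m1, hm1⟩ : ∃ m, Nat.multinomial univ (strElem k hk γ (j + 1)) = m := ⟨_, rfl⟩
      rw [hm0, hm1] at hkey ⊢
      have big := big_lemma m0 m1 (γ ⟨0, by omega⟩) (γ ⟨1, by omega⟩) (∑ i, γ i) j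
        (by omega) hkey
      exact_mod_cast big
  rw [Tm_strPoly, Finset.sum_sub_distrib,
    Finset.sum_range_succ' (fun j => Apart k hk γ j) (γ (⟨1, by omega⟩ : Fin k)),
    Finset.sum_range_succ (fun j => Bpart k hk γ j) (γ (⟨1, by omega⟩ : Fin k)),
    Apart_zero k hk γ hγ, Bpart_top k hk γ, add_zero, add_zero,
    Finset.sum_congr rfl step, sub_self]
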